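/- Let AS = S ⊕ S⁻ be a ℤ/2ℤ-graded algebra, and let M be a simple S-module with DM = S⁻ ⊗_S M simple, DM not isomorphic to M, and η_M: D²M → M nonzero. Then the induced AS-module AS ⊗_S M is simple, and it is (up to isomorphism) the unique simple AS-module whose restriction to S contains M as a submodule. -/

import Mathlib

/-- A `ℤ/2ℤ`-grading of a ring `AS`: a subring `S` (the even part) and an additive subgroup
`Sm` (the odd part) with `S·Sm ⊆ Sm`, `Sm·S ⊆ Sm` and `Sm·Sm ⊆ S`. -/
structure GradedPair (AS : Type*) [Ring AS] where
  S : Subring AS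
  Sm : AddSubgroup AS
  smul_mem : ∀ s ∈ S, ∀ x ∈ Sm, s * x ∈ Sm
  mul_smem : ∀ x ∈ Sm, ∀ s ∈ S, x * s ∈ Sm
  mm_mem : ∀ x ∈ Sm, ∀ y ∈ Sm, x * y ∈ S

namespace GradedPair

variable {AS : Type*} [Ring AS] (g : GradedPair AS)

/-- The odd part `S⁻` is a left module over the even part `S`, by multiplication. -/
instance : SMul g.S g.Sm :=
  ⟨fun s x => ⟨(s : AS) * (x : AS), g.smul_mem _ s.2 _ x.2⟩⟩

@[simp] lemma coe_smul (s : g.S) (x : g.Sm) : ((s • x : g.Sm) : AS) = (s : AS) * x := rfl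

instance : MulAction g.S g.Sm where
  one_smul x := Subtype.ext (one_mul _)
  mul_smul s t x := Subtype.ext (mul_assoc _ _ _)

instance : DistribMulAction g.S g.Sm where
  smul_zero s := Subtype.ext (mul_zero _)
  smul_add s x y := Subtype.ext (mul_add _ _ _)

instance : Module g.S g.Sm where
  add_smul s t x := Subtype.ext (add_mul _ _ _)
  zero_smul x := Subtype.ext (zero_mul _)

/-- The element `x · s` of `S⁻`, for `x ∈ S⁻` and `s ∈ S` (the right action). -/
def rmul (x : g.Sm) (s : g.S) : g.Sm :=
  ⟨(x : AS) * (s : AS), g.mul_smem _ x.2 _ s.2⟩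

/-- The element `x · y` of `S`, for `x, y ∈ S⁻`. -/
def mm (x y : g.Sm) : g.S := ⟨(x : AS) * (y : AS), g.mm_mem _ x.2 _ y.2⟩

variable (N : Type*) [AddCommGroup N] [Module g.S N]

/-- The defining relations of the tensor product `S⁻ ⊗_S N`, inside the free `S`-module
on `S⁻ × N`: biadditivity, `S`-balancedness, and left `S`-linearity in the first factor. -/
noncomputable def TRel : Submodule g.S ((g.Sm × N) →₀ g.S) :=
  Submodule.span g.S
    ({z | ∃ (x x' : g.Sm) (n : N), z = Finsupp.single (x + x', n) 1 -
        Finsupp.single (x, n) 1 - Finsupp.single (x', n) 1} ∪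
     {z | ∃ (x : g.Sm) (n n' : N), z = Finsupp.single (x, n + n') 1 -
        Finsupp.single (x, n) 1 - Finsupp.single (x, n') 1} ∪
     {z | ∃ (x : g.Sm) (s : g.S) (n : N), z = Finsupp.single (g.rmul x s, n) 1 -
        Finsupp.single (x, s • n) 1} ∪
     {z | ∃ (s : g.S) (x : g.Sm) (n : N), z = Finsupp.single (s • x, n) 1 -
        s • Finsupp.single (x, n) 1})

/-- The tensor product `S⁻ ⊗_S N`, as a left `S`-module (the Koszul dual `D(N)`). -/
abbrev T := ((g.Sm × N) →₀ g.S) ⧸ g.TRel N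

variable {N}

/-- The canonical map `S⁻ × N → S⁻ ⊗_S N`, `(x, n) ↦ x ⊗ n`. -/
noncomputable def tmk (x : g.Sm) (n : N) : g.T N :=
  Submodule.Quotient.mk (Finsupp.single (x, n) 1)

end GradedPair


namespace GradedPair

variable {AS : Type*} [Ring AS] (g : GradedPair AS)
variable (M : Type*) [AddCommGroup M] [Module g.S M]

/-- The defining relations of the induced module `AS ⊗_S M`, inside the free `AS`-module
on `M`: additivity in `M` and `S`-balancedness. -/
noncomputable def TARel : Submodule AS (M →₀ AS) :=
  Submodule.span AS
    ({z | ∃ m m' : M, z = Finsupp.single (m + m') 1 - Finsupp.single m 1 -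
        Finsupp.single m' 1} ∪
     {z | ∃ (s : g.S) (m : M), z = Finsupp.single (s • m) 1 -
        (s : AS) • Finsupp.single m 1})

/-- The induced `AS`-module `AS ⊗_S M`. -/
abbrev TA := (M →₀ AS) ⧸ g.TARel M

variable {M}

/-- The canonical map `AS × M → AS ⊗_S M`, `(a, m) ↦ a ⊗ m`. -/
noncomputable def tmkA (a : AS) (m : M) : g.TA M :=
  Submodule.Quotient.mk (Finsupp.single m a)

end GradedPair

namespace GradedPair

variable {AS : Type*} [Ring AS] (g : GradedPair AS)

@[simp] lemma coe_mm (x y : g.Sm) : ((g.mm x y : g.S) : AS) = (x : AS) * y := rfl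
@[simp] lemma coe_rmul (x : g.Sm) (s : g.S) : ((g.rmul x s : g.Sm) : AS) = (x : AS) * s := rfl

lemma mm_add_right (x y y' : g.Sm) : g.mm x (y + y') = g.mm x y + g.mm x y' :=
  Subtype.ext (mul_add _ _ _)
lemma mm_add_left (x x' y : g.Sm) : g.mm (x + x') y = g.mm x y + g.mm x' y :=
  Subtype.ext (add_mul _ _ _)
lemma mm_zero_left (y : g.Sm) : g.mm 0 y = 0 := Subtype.ext (zero_mul _)
lemma mm_zero_right (x : g.Sm) : g.mm x 0 = 0 := Subtype.ext (mul_zero _)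
lemma mm_smul_left (s : g.S) (x y : g.Sm) : g.mm (s • x) y = s * g.mm x y :=
  Subtype.ext (mul_assoc _ _ _)
lemma mm_rmul_left (x : g.Sm) (s : g.S) (y : g.Sm) :
    g.mm (g.rmul x s) y = g.mm x (s • y) := Subtype.ext (mul_assoc _ _ _)

section Tlemmas

variable {N : Type*} [AddCommGroup N] [Module g.S N]

lemma mem_TRel_add_left (x x' : g.Sm) (n : N) :
    (Finsupp.single (x + x', n) 1 - Finsupp.single (x, n) 1 - Finsupp.single (x', n) 1 :
      (g.Sm × N) →₀ g.S) ∈ g.TRel N :=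
  Submodule.subset_span (Or.inl (Or.inl (Or.inl ⟨x, x', n, rfl⟩)))

lemma mem_TRel_add_right (x : g.Sm) (n n' : N) :
    (Finsupp.single (x, n + n') 1 - Finsupp.single (x, n) 1 - Finsupp.single (x, n') 1 :
      (g.Sm × N) →₀ g.S) ∈ g.TRel N :=
  Submodule.subset_span (Or.inl (Or.inl (Or.inr ⟨x, n, n', rfl⟩)))

lemma mem_TRel_rmul (x : g.Sm) (s : g.S) (n : N) :
    (Finsupp.single (g.rmul x s, n) 1 - Finsupp.single (x, s • n) 1 :
      (g.Sm × N) →₀ g.S) ∈ g.TRel N :=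
  Submodule.subset_span (Or.inl (Or.inr ⟨x, s, n, rfl⟩))

lemma mem_TRel_smul (s : g.S) (x : g.Sm) (n : N) :
    (Finsupp.single (s • x, n) 1 - s • Finsupp.single (x, n) 1 :
      (g.Sm × N) →₀ g.S) ∈ g.TRel N :=
  Submodule.subset_span (Or.inr ⟨s, x, n, rfl⟩)

lemma smul_mk_single (s t : g.S) (x : g.Sm) (n : N) :
    s • (Submodule.Quotient.mk (Finsupp.single (x, n) t) : g.T N) =
      Submodule.Quotient.mk (Finsupp.single (x, n) (s * t)) := by
  rw [← Submodule.Quotient.mk_smul, Finsupp.smul_single, smul_eq_mul]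

lemma mk_single_eq (s : g.S) (x : g.Sm) (n : N) :
    (Submodule.Quotient.mk (Finsupp.single (x, n) s) : g.T N) = s • g.tmk x n := by
  rw [tmk, smul_mk_single, mul_one]

lemma tmk_add_left (x x' : g.Sm) (n : N) :
    g.tmk (x + x') n = g.tmk x n + g.tmk x' n := by
  rw [tmk, tmk, tmk, ← Submodule.Quotient.mk_add]
  exact (Submodule.Quotient.eq _).mpr (by simpa [sub_sub] using g.mem_TRel_add_left x x' n)

lemma tmk_add_right (x : g.Sm) (n n' : N) :
    g.tmk x (n + n') = g.tmk x n + g.tmk x n' := by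
  rw [tmk, tmk, tmk, ← Submodule.Quotient.mk_add]
  exact (Submodule.Quotient.eq _).mpr (by simpa [sub_sub] using g.mem_TRel_add_right x n n')

lemma tmk_rmul (x : g.Sm) (s : g.S) (n : N) :
    g.tmk (g.rmul x s) n = g.tmk x (s • n) :=
  (Submodule.Quotient.eq _).mpr (g.mem_TRel_rmul x s n)

lemma tmk_smul_left (s : g.S) (x : g.Sm) (n : N) :
    g.tmk (s • x) n = s • g.tmk x n := by
  rw [tmk, tmk, smul_mk_single, mul_one]
  refine (Submodule.Quotient.eq _).mpr ?_
  simpa [Finsupp.smul_single] using g.mem_TRel_smul s x n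

lemma tmk_zero_left (n : N) : g.tmk (0 : g.Sm) n = 0 := by
  have h := g.tmk_add_left 0 0 n
  rw [add_zero] at h
  exact (left_eq_add.mp h)

lemma tmk_zero_right (x : g.Sm) : g.tmk x (0 : N) = 0 := by
  have h := g.tmk_add_right x (0 : N) 0
  rw [add_zero] at h
  exact (left_eq_add.mp h)

lemma T_induction {P : g.T N → Prop} (t : g.T N) (h0 : P 0)
    (hadd : ∀ a b, P a → P b → P (a + b))
    (hs : ∀ (s : g.S) (x : g.Sm) (n : N), P (s • g.tmk x n)) : P t := by
  obtain ⟨f, rfl⟩ := Submodule.Quotient.mk_surjective _ t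
  induction f using Finsupp.induction with
  | zero => simpa using h0
  | single_add p s f _ _ ih =>
      rw [Submodule.Quotient.mk_add]
      refine hadd _ _ ?_ ih
      have := g.mk_single_eq s p.1 p.2
      rw [Prod.mk.eta] at this
      rw [this]
      exact hs s p.1 p.2

-- lemmas about TA

lemma mem_TARel_add (m m' : N) :
    (Finsupp.single (m + m') 1 - Finsupp.single m 1 - Finsupp.single m' 1 : N →₀ AS) ∈
      g.TARel N :=
  Submodule.subset_span (Or.inl ⟨m, m', rfl⟩)

lemma mem_TARel_smul (s : g.S) (m : N) :
    (Finsupp.single (s • m) 1 - (s : AS) • Finsupp.single m 1 : N →₀ AS) ∈ g.TARel N :=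
  Submodule.subset_span (Or.inr ⟨s, m, rfl⟩)

lemma smul_tmkA (b a : AS) (m : N) : b • g.tmkA a m = g.tmkA (b * a) m := by
  rw [tmkA, tmkA, ← Submodule.Quotient.mk_smul, Finsupp.smul_single, smul_eq_mul]

lemma tmkA_add_left (a b : AS) (m : N) :
    g.tmkA (a + b) m = g.tmkA a m + g.tmkA b m := by
  rw [tmkA, tmkA, tmkA, ← Submodule.Quotient.mk_add, Finsupp.single_add]

lemma tmkA_add_right (a : AS) (m m' : N) :
    g.tmkA a (m + m') = g.tmkA a m + g.tmkA a m' := by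
  rw [tmkA, tmkA, tmkA, ← Submodule.Quotient.mk_add]
  refine (Submodule.Quotient.eq _).mpr ?_
  have h := (g.TARel N).smul_mem a (g.mem_TARel_add m m')
  simpa [smul_sub, Finsupp.smul_single, sub_sub] using h

lemma tmkA_smul (a : AS) (s : g.S) (m : N) :
    g.tmkA a (s • m) = g.tmkA (a * (s : AS)) m := by
  rw [tmkA, tmkA]
  refine (Submodule.Quotient.eq _).mpr ?_
  have h := (g.TARel N).smul_mem a (g.mem_TARel_smul s m)
  simpa [smul_sub, Finsupp.smul_single, smul_smul] using h

lemma tmkA_zero_left (m : N) : g.tmkA (0 : AS) m = 0 := by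
  rw [tmkA, Finsupp.single_zero, Submodule.Quotient.mk_zero]

lemma tmkA_zero_right (a : AS) : g.tmkA a (0 : N) = 0 := by
  have h := g.tmkA_add_right a (0 : N) 0
  rw [add_zero] at h
  exact (left_eq_add.mp h)

lemma TA_induction {P : g.TA N → Prop} (v : g.TA N) (h0 : P 0)
    (hadd : ∀ a b, P a → P b → P (a + b))
    (hs : ∀ (a : AS) (m : N), P (g.tmkA a m)) : P v := by
  obtain ⟨f, rfl⟩ := Submodule.Quotient.mk_surjective _ v
  induction f using Finsupp.induction with
  | zero => simpa using h0
  | single_add m a f _ _ ih =>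
      rw [Submodule.Quotient.mk_add]
      exact hadd _ _ (hs a m) ih

-- the map η_x : T N →+ N

noncomputable def etaAux (x : g.Sm) : ((g.Sm × N) →₀ g.S) →+ N :=
  Finsupp.liftAddHom fun p =>
    { toFun := fun s => g.mm x (s • p.1) • p.2
      map_zero' := by
        show g.mm x ((0 : g.S) • p.1) • p.2 = 0
        rw [zero_smul, g.mm_zero_right, zero_smul]
      map_add' := fun s t => by
        show g.mm x ((s + t) • p.1) • p.2 = g.mm x (s • p.1) • p.2 + g.mm x (t • p.1) • p.2
        rw [add_smul, g.mm_add_right, add_smul] }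

@[simp] lemma etaAux_single (x : g.Sm) (p : g.Sm × N) (s : g.S) :
    g.etaAux x (Finsupp.single p s) = g.mm x (s • p.1) • p.2 := by
  rw [etaAux, Finsupp.liftAddHom_apply_single]; rfl

lemma etaAux_vanish (x : g.Sm) : ∀ z ∈ g.TRel N, g.etaAux x z = 0 := by
  have key : ∀ z ∈ g.TRel N, ∀ s : g.S, g.etaAux x (s • z) = 0 := by
    intro z hz
    induction hz using Submodule.span_induction with
    | mem z hmem =>
        intro s
        have hsing : ∀ (u : g.S) (p : g.Sm × N) (t : g.S),
            u • Finsupp.single p t = Finsupp.single p (u * t) := fun u p t => by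
          rw [Finsupp.smul_single, smul_eq_mul]
        rcases hmem with ((⟨y, y', n, rfl⟩ | ⟨y, n, n', rfl⟩) | ⟨y, s', n, rfl⟩) | ⟨s', y, n, rfl⟩
        · rw [smul_sub, smul_sub, hsing, hsing, hsing, map_sub, map_sub, etaAux_single,
            etaAux_single, etaAux_single]
          show g.mm x ((s * 1) • (y + y')) • n - _ - _ = 0
          rw [mul_one, smul_add, g.mm_add_right, add_smul]
          abel
        · rw [smul_sub, smul_sub, hsing, hsing, hsing, map_sub, map_sub, etaAux_single,
            etaAux_single, etaAux_single]
          show g.mm x ((s * 1) • y) • (n + n') - _ - _ = 0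
          rw [mul_one, smul_add]
          abel
        · rw [smul_sub, hsing, hsing, map_sub, etaAux_single, etaAux_single]
          show g.mm x ((s * 1) • g.rmul y s') • n - g.mm x ((s * 1) • y) • s' • n = 0
          rw [mul_one, ← mul_smul]
          rw [show g.mm x (s • g.rmul y s') = g.mm x (s • y) * s' from
            Subtype.ext (by simp [mul_assoc])]
          exact sub_self _
        · rw [smul_sub, smul_smul, hsing, hsing, map_sub, etaAux_single, etaAux_single]
          show g.mm x ((s * 1) • s' • y) • n - g.mm x (((s * s') * 1) • y) • n = 0
          rw [show ((s * 1) • s' • y : g.Sm) = ((s * s') * 1) • y from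
            Subtype.ext (by simp [mul_assoc])]
          exact sub_self _
    | zero => intro s; simp
    | add z w _ _ hz hw => intro s; rw [smul_add, map_add, hz s, hw s, add_zero]
    | smul t z _ hz => intro s; rw [smul_smul]; exact hz (s * t)
  intro z hz
  simpa using key z hz 1

noncomputable def eta (x : g.Sm) : g.T N →+ N :=
  QuotientAddGroup.lift (g.TRel N).toAddSubgroup (g.etaAux x) (g.etaAux_vanish x)

lemma eta_mk (x : g.Sm) (f : (g.Sm × N) →₀ g.S) :
    g.eta x (Submodule.Quotient.mk f) = g.etaAux x f := rfl

lemma eta_smul_tmk (x : g.Sm) (s : g.S) (y : g.Sm) (n : N) :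
    g.eta x (s • g.tmk y n) = g.mm x (s • y) • n := by
  rw [← g.mk_single_eq, eta_mk, etaAux_single]

lemma eta_tmk (x y : g.Sm) (n : N) : g.eta x (g.tmk y n) = g.mm x y • n := by
  simpa using g.eta_smul_tmk x 1 y n

lemma eta_smul_left (s : g.S) (x : g.Sm) (t : g.T N) :
    g.eta (s • x) t = s • g.eta x t := by
  refine g.T_induction (P := fun t => g.eta (s • x) t = s • g.eta x t) t (by simp)
    (fun a b ha hb => by rw [map_add, map_add, ha, hb, smul_add])
    (fun s' y n => ?_)
  rw [eta_smul_tmk, eta_smul_tmk, g.mm_smul_left, mul_smul]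

lemma eta_rmul_left (x : g.Sm) (s : g.S) (t : g.T N) :
    g.eta (g.rmul x s) t = g.eta x (s • t) := by
  refine g.T_induction (P := fun t => g.eta (g.rmul x s) t = g.eta x (s • t)) t (by simp)
    (fun a b ha hb => by rw [map_add, smul_add, map_add, ha, hb])
    (fun s' y n => ?_)
  rw [eta_smul_tmk, smul_smul, eta_smul_tmk, g.mm_rmul_left, smul_smul]

lemma eta_add_left (x x' : g.Sm) (t : g.T N) :
    g.eta (x + x') t = g.eta x t + g.eta x' t := by
  refine g.T_induction (P := fun t => g.eta (x + x') t = g.eta x t + g.eta x' t) t (by simp)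
    (fun a b ha hb => by rw [map_add, map_add, map_add, ha, hb]; abel)
    (fun s y n => ?_)
  rw [eta_smul_tmk, eta_smul_tmk, eta_smul_tmk, g.mm_add_left, add_smul]

lemma eta_zero_left (t : g.T N) : g.eta (0 : g.Sm) t = 0 := by
  refine g.T_induction (P := fun t => g.eta (0 : g.Sm) t = 0) t (by simp)
    (fun a b ha hb => by rw [map_add, ha, hb, add_zero])
    (fun s y n => ?_)
  rw [eta_smul_tmk, g.mm_zero_left, zero_smul]

lemma mm_smul_T (x y : g.Sm) (t : g.T N) :
    g.mm x y • t = g.tmk x (g.eta y t) := by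
  refine g.T_induction (P := fun t => g.mm x y • t = g.tmk x (g.eta y t)) t
    (by rw [smul_zero, map_zero, g.tmk_zero_right])
    (fun a b ha hb => by rw [smul_add, map_add, g.tmk_add_right, ha, hb])
    (fun s z n => ?_)
  rw [smul_smul, ← g.tmk_smul_left, eta_smul_tmk, ← g.tmk_rmul]
  congr 1
  exact Subtype.ext (by simp [mul_assoc])

-- the map ψ₂ : T N →+ TA N

noncomputable def psiAux : ((g.Sm × N) →₀ g.S) →+ g.TA N :=
  Finsupp.liftAddHom fun p =>
    { toFun := fun s => g.tmkA ((s : AS) * (p.1 : AS)) p.2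
      map_zero' := by simpa using g.tmkA_zero_left p.2
      map_add' := fun s t => by
        push_cast
        rw [add_mul, g.tmkA_add_left] }

@[simp] lemma psiAux_single (p : g.Sm × N) (s : g.S) :
    g.psiAux (Finsupp.single p s) = g.tmkA ((s : AS) * (p.1 : AS)) p.2 := by
  rw [psiAux, Finsupp.liftAddHom_apply_single]; rfl

lemma psiAux_vanish : ∀ z ∈ g.TRel N, g.psiAux z = 0 := by
  have key : ∀ z ∈ g.TRel N, ∀ s : g.S, g.psiAux (s • z) = 0 := by
    intro z hz
    induction hz using Submodule.span_induction with
    | mem z hmem =>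
        intro s
        have hsing : ∀ (u : g.S) (p : g.Sm × N) (t : g.S),
            u • Finsupp.single p t = Finsupp.single p (u * t) := fun u p t => by
          rw [Finsupp.smul_single, smul_eq_mul]
        rcases hmem with ((⟨y, y', n, rfl⟩ | ⟨y, n, n', rfl⟩) | ⟨y, s', n, rfl⟩) | ⟨s', y, n, rfl⟩
        · rw [smul_sub, smul_sub, hsing, hsing, hsing, map_sub, map_sub, psiAux_single,
            psiAux_single, psiAux_single]
          show g.tmkA (((s * 1 : g.S) : AS) * ((y + y' : g.Sm) : AS)) n - _ - _ = 0
          push_cast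
          rw [mul_one, mul_add, g.tmkA_add_left]
          abel
        · rw [smul_sub, smul_sub, hsing, hsing, hsing, map_sub, map_sub, psiAux_single,
            psiAux_single, psiAux_single]
          show g.tmkA _ (n + n') - _ - _ = 0
          rw [g.tmkA_add_right]
          abel
        · rw [smul_sub, hsing, hsing, map_sub, psiAux_single, psiAux_single]
          show g.tmkA (((s * 1 : g.S) : AS) * ((g.rmul y s' : g.Sm) : AS)) n -
            g.tmkA _ (s' • n) = 0
          rw [g.tmkA_smul]
          rw [show (((s * 1 : g.S) : AS) * ((g.rmul y s' : g.Sm) : AS)) =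
            (((s * 1 : g.S) : AS) * (y : AS)) * (s' : AS) from by
              push_cast; simp [mul_assoc]]
          exact sub_self _
        · rw [smul_sub, smul_smul, hsing, hsing, map_sub, psiAux_single, psiAux_single]
          show g.tmkA (((s * 1 : g.S) : AS) * ((s' • y : g.Sm) : AS)) n -
            g.tmkA ((((s * s') * 1 : g.S) : AS) * (y : AS)) n = 0
          rw [show (((s * 1 : g.S) : AS) * ((s' • y : g.Sm) : AS)) =
            ((((s * s') * 1 : g.S) : AS) * (y : AS)) from by
              push_cast [coe_smul]; simp [mul_assoc]]
          exact sub_self _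
    | zero => intro s; simp
    | add z w _ _ hz hw => intro s; rw [smul_add, map_add, hz s, hw s, add_zero]
    | smul t z _ hz => intro s; rw [smul_smul]; exact hz (s * t)
  intro z hz
  simpa using key z hz 1

noncomputable def psi2 : g.T N →+ g.TA N :=
  QuotientAddGroup.lift (g.TRel N).toAddSubgroup g.psiAux g.psiAux_vanish

lemma psi2_mk (f : (g.Sm × N) →₀ g.S) :
    g.psi2 (Submodule.Quotient.mk f : g.T N) = g.psiAux f := rfl

lemma psi2_smul_tmk (s : g.S) (x : g.Sm) (n : N) :
    g.psi2 (s • g.tmk x n) = g.tmkA ((s : AS) * (x : AS)) n := by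
  rw [← g.mk_single_eq, psi2_mk, psiAux_single]

lemma psi2_tmk (x : g.Sm) (n : N) : g.psi2 (g.tmk x n) = g.tmkA (x : AS) n := by
  simpa using g.psi2_smul_tmk 1 x n

end Tlemmas

-- decomposition maps

section decomp

variable (hcompl : ∀ a : AS, ∃! p : g.S × g.Sm, a = (p.1 : AS) + (p.2 : AS))

noncomputable def sig (a : AS) : g.S := ((hcompl a).exists.choose).1

noncomputable def tau (a : AS) : g.Sm := ((hcompl a).exists.choose).2

lemma sig_tau_spec (a : AS) :
    a = (g.sig hcompl a : AS) + (g.tau hcompl a : AS) := (hcompl a).exists.choose_spec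

lemma sig_tau_eq {a : AS} {s : g.S} {x : g.Sm} (h : a = (s : AS) + (x : AS)) :
    g.sig hcompl a = s ∧ g.tau hcompl a = x := by
  have h2 := (hcompl a).unique (y₁ := (g.sig hcompl a, g.tau hcompl a))
    (y₂ := (s, x)) (g.sig_tau_spec hcompl a) h
  exact ⟨congrArg Prod.fst h2, congrArg Prod.snd h2⟩

lemma sig_coeS (s : g.S) : g.sig hcompl (s : AS) = s :=
  (g.sig_tau_eq hcompl (s := s) (x := 0) (by simp)).1

lemma tau_coeS (s : g.S) : g.tau hcompl (s : AS) = 0 :=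
  (g.sig_tau_eq hcompl (s := s) (x := 0) (by simp)).2

lemma sig_coeSm (x : g.Sm) : g.sig hcompl (x : AS) = 0 :=
  (g.sig_tau_eq hcompl (s := 0) (x := x) (by simp)).1

lemma tau_coeSm (x : g.Sm) : g.tau hcompl (x : AS) = x :=
  (g.sig_tau_eq hcompl (s := 0) (x := x) (by simp)).2

lemma sig_zero : g.sig hcompl 0 = 0 := by
  simpa using g.sig_coeS hcompl 0

lemma tau_zero : g.tau hcompl 0 = 0 := by
  simpa using g.tau_coeS hcompl 0

lemma sig_one : g.sig hcompl 1 = 1 := by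
  simpa using g.sig_coeS hcompl 1

lemma tau_one : g.tau hcompl 1 = 0 := by
  simpa using g.tau_coeS hcompl 1

lemma sig_add (a b : AS) :
    g.sig hcompl (a + b) = g.sig hcompl a + g.sig hcompl b ∧
      g.tau hcompl (a + b) = g.tau hcompl a + g.tau hcompl b := by
  refine g.sig_tau_eq hcompl ?_
  push_cast
  conv_lhs => rw [g.sig_tau_spec hcompl a, g.sig_tau_spec hcompl b]
  abel

lemma sig_mul (a b : AS) :
    g.sig hcompl (a * b) =
      g.sig hcompl a * g.sig hcompl b + g.mm (g.tau hcompl a) (g.tau hcompl b) ∧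
    g.tau hcompl (a * b) =
      g.sig hcompl a • g.tau hcompl b + g.rmul (g.tau hcompl a) (g.sig hcompl b) := by
  refine g.sig_tau_eq hcompl ?_
  push_cast [coe_mm, coe_rmul, coe_smul]
  conv_lhs => rw [g.sig_tau_spec hcompl a, g.sig_tau_spec hcompl b]
  noncomm_ring

end decomp

end GradedPair

universe u

set_option linter.unusedVariables false in
set_option maxHeartbeats 1600000 in
/-- let `AS = S ⊕ S⁻` be a `ℤ/2ℤ`-graded algebra and `M` a simple `S`-module
such that `DM = S⁻ ⊗_S M` is simple, `DM` is not isomorphic to `M`, and `η_M : D²M → M`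
(determined by `x ⊗ (y ⊗ m) ↦ (xy)·m`) is nonzero.  Then the induced `AS`-module
`AS ⊗_S M` is simple, and it is, up to isomorphism, the unique simple `AS`-module whose
restriction to `S` contains `M` as a submodule. -/
theorem stmt_15 {AS : Type u} [Ring AS] (g : GradedPair AS)
    (hcompl : ∀ a : AS, ∃! p : g.S × g.Sm, a = (p.1 : AS) + (p.2 : AS))
    (M : Type u) [AddCommGroup M] [Module g.S M]
    (hM : IsSimpleModule g.S M) (hDM : IsSimpleModule g.S (g.T M))
    (hniso : IsEmpty (g.T M ≃ₗ[g.S] M))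
    (hη : ∃ (x y : g.Sm) (m : M), g.mm x y • m ≠ 0) :
    IsSimpleModule AS (g.TA M) ∧
    ∀ (P : Type u) [AddCommGroup P] [Module AS P], IsSimpleModule AS P →
      (∃ f : M →ₗ[g.S] P, Function.Injective f) →
      Nonempty (g.TA M ≃ₗ[AS] P) := by
    classical
  haveI : Nontrivial M := IsSimpleModule.nontrivial g.S M
  obtain ⟨m0, hm0⟩ := exists_ne (0 : M)
  -- the AS-module structure on M × T M
  letI instSMulW : SMul AS (M × g.T M) :=
    ⟨fun a v => (g.sig hcompl a • v.1 + g.eta (g.tau hcompl a) v.2,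
                 g.sig hcompl a • v.2 + g.tmk (g.tau hcompl a) v.1)⟩
  have smul_def : ∀ (a : AS) (v : M × g.T M), a • v =
      (g.sig hcompl a • v.1 + g.eta (g.tau hcompl a) v.2,
       g.sig hcompl a • v.2 + g.tmk (g.tau hcompl a) v.1) := fun _ _ => rfl
  letI instMAW : MulAction AS (M × g.T M) :=
    { one_smul := fun v => by
        rw [smul_def, g.sig_one hcompl, g.tau_one hcompl, g.eta_zero_left, g.tmk_zero_left,
          one_smul, one_smul, add_zero, add_zero]
      mul_smul := fun a b v => by
        rw [smul_def, smul_def, smul_def, (g.sig_mul hcompl a b).1, (g.sig_mul hcompl a b).2]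
        dsimp only
        refine Prod.ext ?_ ?_
        · dsimp only
          rw [add_smul, mul_smul, g.eta_add_left, g.eta_smul_left, g.eta_rmul_left, smul_add,
            map_add, g.eta_tmk]
          abel
        · dsimp only
          rw [add_smul, mul_smul, g.tmk_add_left, g.tmk_smul_left, g.tmk_rmul, g.mm_smul_T,
            smul_add, g.tmk_add_right]
          abel }
  letI instDMAW : DistribMulAction AS (M × g.T M) :=
    { smul_zero := fun a => by
        rw [smul_def]
        simp [g.tmk_zero_right]
      smul_add := fun a v w => by
        rw [smul_def, smul_def, smul_def]
        refine Prod.ext ?_ ?_ <;> dsimp only <;>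
          simp only [Prod.fst_add, Prod.snd_add, smul_add, map_add, g.tmk_add_right] <;> abel }
  letI instModW : Module AS (M × g.T M) :=
    { add_smul := fun a b v => by
        rw [smul_def, smul_def, smul_def, (g.sig_add hcompl a b).1, (g.sig_add hcompl a b).2]
        refine Prod.ext ?_ ?_ <;> dsimp only <;>
          simp only [Prod.fst_add, Prod.snd_add, add_smul, g.eta_add_left, g.tmk_add_left] <;>
          abel
      zero_smul := fun v => by
        rw [smul_def, g.sig_zero hcompl, g.tau_zero hcompl, g.eta_zero_left, g.tmk_zero_left,
          zero_smul, zero_smul, add_zero, add_zero]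
        rfl }
  -- action of the even and odd parts
  have hSact : ∀ (s : g.S) (v : M × g.T M), (s : AS) • v = (s • v.1, s • v.2) := by
    intro s v
    rw [smul_def, g.sig_coeS hcompl, g.tau_coeS hcompl, g.eta_zero_left, g.tmk_zero_left,
      add_zero, add_zero]
  have hXact : ∀ (x : g.Sm) (v : M × g.T M), (x : AS) • v = (g.eta x v.2, g.tmk x v.1) := by
    intro x v
    rw [smul_def, g.sig_coeSm hcompl, g.tau_coeSm hcompl, zero_smul, zero_smul, zero_add,
      zero_add]
  -- simplicity of M × T M
  have hWsimple : IsSimpleModule AS (M × g.T M) := by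
    have hbt : (⊥ : Submodule AS (M × g.T M)) ≠ ⊤ := by
      intro h
      have hmem : ((m0, 0) : M × g.T M) ∈ (⊥ : Submodule AS (M × g.T M)) := by
        rw [h]; exact Submodule.mem_top
      rw [Submodule.mem_bot] at hmem
      exact hm0 (congrArg Prod.fst hmem)
    refine { toNontrivial := ⟨⊥, ⊤, hbt⟩, eq_bot_or_eq_top := fun U => ?_ }
    by_cases hUbot : U = ⊥
    · exact Or.inl hUbot
    right
    obtain ⟨v0, hv0U, hv0⟩ := U.ne_bot_iff.mp hUbot
    set M0 : Submodule g.S M :=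
      { carrier := {m | ((m, 0) : M × g.T M) ∈ U}
        add_mem' := fun {a b} ha hb => by
          have h := U.add_mem ha hb
          simpa using h
        zero_mem' := by exact U.zero_mem
        smul_mem' := fun s m hm => by
          have h := U.smul_mem ((s : AS)) hm
          rw [hSact] at h
          simpa using h } with hM0def
    set T0 : Submodule g.S (g.T M) :=
      { carrier := {t | ((0, t) : M × g.T M) ∈ U}
        add_mem' := fun {a b} ha hb => by
          have h := U.add_mem ha hb
          simpa using h
        zero_mem' := by exact U.zero_mem
        smul_mem' := fun s t ht => by
          have h := U.smul_mem ((s : AS)) ht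
          rw [hSact] at h
          simpa using h } with hT0def
    have hM0top : M0 = ⊤ → U = ⊤ := by
      intro hM0
      have hall1 : ∀ m : M, ((m, 0) : M × g.T M) ∈ U := fun m => by
        have hm : m ∈ M0 := hM0 ▸ Submodule.mem_top
        exact hm
      have hallT : ∀ t : g.T M, ((0, t) : M × g.T M) ∈ U := by
        intro t
        refine g.T_induction (P := fun t => ((0, t) : M × g.T M) ∈ U) t ?_ ?_ ?_
        · exact U.zero_mem
        · intro a b ha hb
          have h := U.add_mem ha hb
          simpa using h
        · intro s x m
          have h1 := U.smul_mem ((x : AS)) (hall1 m)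
          rw [hXact] at h1
          have h2 := U.smul_mem ((s : AS)) h1
          rw [hSact] at h2
          simpa using h2
      rw [eq_top_iff]
      rintro ⟨m, t⟩ -
      have h := U.add_mem (hall1 m) (hallT t)
      simpa using h
    have hT0top : T0 = ⊤ → U = ⊤ := by
      intro hT0
      obtain ⟨x, y, m, hxy⟩ := hη
      have hmem : ((0, g.tmk y m) : M × g.T M) ∈ U := by
        have ht : g.tmk y m ∈ T0 := hT0 ▸ Submodule.mem_top
        exact ht
      have h1 := U.smul_mem ((x : AS)) hmem
      rw [hXact] at h1
      have h2 : ((g.mm x y • m, 0) : M × g.T M) ∈ U := by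
        simpa [g.eta_tmk, g.tmk_zero_right] using h1
      have hM0ne : M0 ≠ ⊥ := by
        intro h
        have hmm : g.mm x y • m ∈ M0 := h2
        rw [h] at hmm
        exact hxy (by simpa using hmm)
      exact hM0top ((hM.eq_bot_or_eq_top M0).resolve_left hM0ne)
    rcases hDM.eq_bot_or_eq_top T0 with hT0 | hT0
    · rcases hM.eq_bot_or_eq_top M0 with hM0 | hM0
      · -- graph case: contradiction with hniso
        exfalso
        have hv02 : v0.2 ≠ 0 := by
          intro h
          have hmem : v0.1 ∈ M0 := by
            show ((v0.1, 0) : M × g.T M) ∈ U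
            rw [← h]
            simpa using hv0U
          rw [hM0, Submodule.mem_bot] at hmem
          exact hv0 (Prod.ext hmem h)
        have hv01 : v0.1 ≠ 0 := by
          intro h
          have hmem : v0.2 ∈ T0 := by
            show ((0, v0.2) : M × g.T M) ∈ U
            rw [← h]
            simpa using hv0U
          rw [hT0, Submodule.mem_bot] at hmem
          exact hv0 (Prod.ext h hmem)
        set Pr : Submodule g.S M :=
          { carrier := {m | ∃ t, ((m, t) : M × g.T M) ∈ U}
            add_mem' := fun {a b} ha hb => by
              obtain ⟨ta, hta⟩ := ha
              obtain ⟨tb, htb⟩ := hb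
              refine ⟨ta + tb, ?_⟩
              have h := U.add_mem hta htb
              simpa using h
            zero_mem' := ⟨0, by exact U.zero_mem⟩
            smul_mem' := fun s m hm => by
              obtain ⟨t, ht⟩ := hm
              refine ⟨s • t, ?_⟩
              have h := U.smul_mem ((s : AS)) ht
              rw [hSact] at h
              simpa using h } with hPrdef
        have hPrtop : Pr = ⊤ := by
          refine (hM.eq_bot_or_eq_top Pr).resolve_left ?_
          intro h
          have hmem : v0.1 ∈ Pr := ⟨v0.2, by simpa using hv0U⟩
          rw [h] at hmem
          exact hv01 (by simpa using hmem)
        have hex : ∀ m : M, ∃ t, ((m, t) : M × g.T M) ∈ U := fun m => by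
          have hm : m ∈ Pr := hPrtop ▸ Submodule.mem_top
          exact hm
        choose φ hφ using hex
        have huniq : ∀ (m : M) (t : g.T M), ((m, t) : M × g.T M) ∈ U → t = φ m := by
          intro m t ht
          have h := U.sub_mem ht (hφ m)
          have h2 : t - φ m ∈ T0 := by
            show ((0, t - φ m) : M × g.T M) ∈ U
            simpa using h
          rw [hT0, Submodule.mem_bot] at h2
          exact sub_eq_zero.mp h2
        have haddφ : ∀ a b, φ (a + b) = φ a + φ b := fun a b =>
          (huniq (a + b) (φ a + φ b) (by
            have h := U.add_mem (hφ a) (hφ b)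
            simpa using h)).symm
        have hsmulφ : ∀ (s : g.S) (m : M), φ (s • m) = s • φ m := fun s m =>
          (huniq (s • m) (s • φ m) (by
            have h := U.smul_mem ((s : AS)) (hφ m)
            rw [hSact] at h
            exact h)).symm
        set φL : M →ₗ[g.S] g.T M :=
          { toFun := φ, map_add' := haddφ, map_smul' := hsmulφ } with hφLdef
        have hinj : Function.Injective φL := by
          intro a b hab
          have heq : φ a - φ b = 0 := by
            have h : φ a = φ b := hab
            rw [h, sub_self]
          have hsub : ((a - b, 0) : M × g.T M) ∈ U := by
            have h := U.sub_mem (hφ a) (hφ b)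
            simpa [heq] using h
          have h2 : a - b ∈ M0 := hsub
          rw [hM0, Submodule.mem_bot] at h2
          exact sub_eq_zero.mp h2
        have hsurj : Function.Surjective φL := by
          have hne : LinearMap.range φL ≠ ⊥ := by
            intro h
            have hmem : φL v0.1 ∈ LinearMap.range φL := ⟨v0.1, rfl⟩
            rw [h, Submodule.mem_bot] at hmem
            have hv : v0.2 = φ v0.1 := huniq v0.1 v0.2 (by simpa using hv0U)
            exact hv02 (by rw [hv]; exact hmem)
          rw [← LinearMap.range_eq_top]
          exact (hDM.eq_bot_or_eq_top _).resolve_left hne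
        exact hniso.false (LinearEquiv.ofBijective φL ⟨hinj, hsurj⟩).symm
      · exact hM0top hM0
    · exact hT0top hT0
  -- the isomorphism TA M ≃ M × T M
  set F0 : (M →₀ AS) →ₗ[AS] (M × g.T M) :=
    Finsupp.linearCombination AS (fun m => ((m, 0) : M × g.T M)) with hF0def
  have hF0single : ∀ (m : M) (a : AS),
      F0 (Finsupp.single m a) = a • ((m, 0) : M × g.T M) := fun m a => by
    rw [hF0def, Finsupp.linearCombination_single]
  have hker0 : g.TARel M ≤ LinearMap.ker F0 := by
    rw [GradedPair.TARel, Submodule.span_le]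
    rintro z (⟨m, m', rfl⟩ | ⟨s, m, rfl⟩)
    · simp only [SetLike.mem_coe, LinearMap.mem_ker, map_sub, hF0single, one_smul]
      rw [Prod.mk_sub_mk, Prod.mk_sub_mk]
      refine Prod.ext ?_ ?_ <;> simp only [Prod.fst_zero, Prod.snd_zero] <;> abel
    · simp only [SetLike.mem_coe, LinearMap.mem_ker, map_sub, map_smul, hF0single, one_smul]
      rw [hSact]
      simp
  set Φ : g.TA M →ₗ[AS] (M × g.T M) := Submodule.liftQ _ F0 hker0 with hΦdef
  have hΦtm : ∀ (a : AS) (m : M), Φ (g.tmkA a m) = a • ((m, 0) : M × g.T M) := fun a m => by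
    rw [hΦdef, GradedPair.tmkA, Submodule.liftQ_apply]
    exact hF0single m a
  set Ψ : M × g.T M → g.TA M := fun v => g.tmkA 1 v.1 + g.psi2 v.2 with hΨdef
  have hΨΦ : ∀ v : g.TA M, Ψ (Φ v) = v := by
    intro v
    refine g.TA_induction (P := fun v => Ψ (Φ v) = v) v ?_ ?_ ?_
    · rw [map_zero]
      show g.tmkA 1 (0 : M) + g.psi2 0 = 0
      rw [g.tmkA_zero_right, map_zero, add_zero]
    · intro a b ha hb
      rw [map_add, hΨdef]
      show g.tmkA 1 (Φ a + Φ b).1 + g.psi2 (Φ a + Φ b).2 = a + b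
      rw [Prod.fst_add, Prod.snd_add, g.tmkA_add_right, map_add]
      have ha' : g.tmkA 1 (Φ a).1 + g.psi2 (Φ a).2 = a := ha
      have hb' : g.tmkA 1 (Φ b).1 + g.psi2 (Φ b).2 = b := hb
      conv_rhs => rw [← ha', ← hb']
      abel
    · intro a m
      rw [hΦtm, smul_def]
      show g.tmkA 1 (g.sig hcompl a • m + g.eta (g.tau hcompl a) 0) +
        g.psi2 (g.sig hcompl a • (0 : g.T M) + g.tmk (g.tau hcompl a) m) = g.tmkA a m
      rw [map_zero, add_zero, smul_zero, zero_add, g.tmkA_smul, one_mul, g.psi2_tmk,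
        ← g.tmkA_add_left, ← g.sig_tau_spec hcompl a]
  have hΦinj : Function.Injective Φ := Function.LeftInverse.injective hΨΦ
  have hΦsurj : Function.Surjective Φ := by
    have h1 : ∀ m : M, ((m, 0) : M × g.T M) ∈ LinearMap.range Φ := fun m =>
      ⟨g.tmkA 1 m, by rw [hΦtm, one_smul]⟩
    have h2 : ∀ t : g.T M, ((0, t) : M × g.T M) ∈ LinearMap.range Φ := by
      intro t
      refine g.T_induction (P := fun t => ((0, t) : M × g.T M) ∈ LinearMap.range Φ) t ?_ ?_ ?_
      · exact (LinearMap.range Φ).zero_mem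
      · intro a b ha hb
        have h := (LinearMap.range Φ).add_mem ha hb
        simpa using h
      · intro s x m
        have hx := (LinearMap.range Φ).smul_mem ((x : AS)) (h1 m)
        rw [hXact] at hx
        have hs := (LinearMap.range Φ).smul_mem ((s : AS)) hx
        rw [hSact] at hs
        simpa using hs
    intro v
    have hv : v ∈ LinearMap.range Φ := by
      rw [show v = ((v.1, 0) : M × g.T M) + ((0, v.2) : M × g.T M) from by simp]
      exact (LinearMap.range Φ).add_mem (h1 v.1) (h2 v.2)
    exact hv
  have hTAsimple : IsSimpleModule AS (g.TA M) := by
    haveI := hWsimple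
    exact IsSimpleModule.congr (LinearEquiv.ofBijective Φ ⟨hΦinj, hΦsurj⟩)
  refine ⟨hTAsimple, ?_⟩
  intro P _ _ hP hf
  obtain ⟨f, hfinj⟩ := hf
  set G0 : (M →₀ AS) →ₗ[AS] P := Finsupp.linearCombination AS (fun m => f m) with hG0def
  have hG0single : ∀ (m : M) (a : AS), G0 (Finsupp.single m a) = a • f m := fun m a => by
    rw [hG0def, Finsupp.linearCombination_single]
  have hkerG : g.TARel M ≤ LinearMap.ker G0 := by
    rw [GradedPair.TARel, Submodule.span_le]
    rintro z (⟨m, m', rfl⟩ | ⟨s, m, rfl⟩)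
    · simp only [SetLike.mem_coe, LinearMap.mem_ker, map_sub, hG0single, one_smul, map_add]
      abel
    · simp only [SetLike.mem_coe, LinearMap.mem_ker, map_sub, map_smul, hG0single, one_smul]
      exact sub_self (s • f m)
  set G : g.TA M →ₗ[AS] P := Submodule.liftQ _ G0 hkerG with hGdef
  have hGtm : ∀ m : M, G (g.tmkA 1 m) = f m := fun m => by
    rw [hGdef, GradedPair.tmkA, Submodule.liftQ_apply, hG0single, one_smul]
  have hf0 : f m0 ≠ 0 := fun h => hm0 (hfinj (by rw [h, map_zero]))
  have hkerne : LinearMap.ker G ≠ ⊤ := by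
    intro h
    have hmem : g.tmkA 1 m0 ∈ LinearMap.ker G := h ▸ Submodule.mem_top
    rw [LinearMap.mem_ker, hGtm] at hmem
    exact hf0 hmem
  have hkerbot : LinearMap.ker G = ⊥ := (hTAsimple.eq_bot_or_eq_top _).resolve_right hkerne
  have hrange : LinearMap.range G = ⊤ := by
    refine (hP.eq_bot_or_eq_top _).resolve_left ?_
    intro h
    have hmem : G (g.tmkA 1 m0) ∈ LinearMap.range G := ⟨_, rfl⟩
    rw [h, Submodule.mem_bot, hGtm] at hmem
    exact hf0 hmem
  exact ⟨LinearEquiv.ofBijective G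
    ⟨LinearMap.ker_eq_bot.mp hkerbot, LinearMap.range_eq_top.mp hrange⟩⟩
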